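/- Let α ≤ 0 and C_{α,N} = (∑_{|n| ≤ N} 2⟨n⟩^{-4α})^{-1/4}. Then for each fixed n ∈ ℤ, C_{α,N}⁴ · ∑_{n₁ + n₂ = n, |n₁|,|n₂| ≤ N} |φ(n₁) + φ(n₂)| ⟨n₁⟩^{-2α}⟨n₂⟩^{-2α} → 0 as N → ∞, where φ(m) = -im/(1+m²). -/

import Mathlib

open Filter

/-- The BBM Fourier multiplier symbol `φ(n) = -i n / (1 + n²)`. -/
noncomputable def phiSym (n : ℤ) : ℂ := (-Complex.I * (n : ℂ)) / (1 + (n : ℂ) ^ 2)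

/-- The Japanese bracket `⟨n⟩ = √(1 + n²)`. -/
noncomputable def jbr (n : ℤ) : ℝ := Real.sqrt (1 + (n : ℝ) ^ 2)

/-- The renormalization constant `C_{α,N} = (∑_{|n| ≤ N} 2 ⟨n⟩^{-4α})^{-1/4}`. -/
noncomputable def renC (α : ℝ) (N : ℕ) : ℝ :=
  (∑ n ∈ Finset.Icc (-(N : ℤ)) (N : ℤ), 2 / jbr n ^ (4 * α)) ^ (-(1 / 4 : ℝ))

/-- The set of pairs `(n₁, n₂)` with `|n₁|, |n₂| ≤ N` and `n₁ + n₂ = n`. -/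
noncomputable def pairSet (N : ℕ) (n : ℤ) : Finset (ℤ × ℤ) :=
  ((Finset.Icc (-(N : ℤ)) (N : ℤ)) ×ˢ (Finset.Icc (-(N : ℤ)) (N : ℤ))).filter
    (fun p => p.1 + p.2 = n)


lemma jbr_pos (k : ℤ) : 0 < jbr k := Real.sqrt_pos.2 (by positivity)

lemma one_le_jbr (k : ℤ) : 1 ≤ jbr k := by
  rw [show (1:ℝ) = Real.sqrt 1 by simp [Real.sqrt_one]]
  exact Real.sqrt_le_sqrt (by nlinarith [sq_nonneg ((k:ℝ))])

lemma abs_le_jbr (k : ℤ) : |(k:ℝ)| ≤ jbr k := by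
  rw [← Real.sqrt_sq_eq_abs]
  exact Real.sqrt_le_sqrt (by nlinarith)

lemma sq_jbr (k : ℤ) : jbr k ^ 2 = 1 + (k:ℝ)^2 := Real.sq_sqrt (by positivity)

lemma jbr_neg (k : ℤ) : jbr (-k) = jbr k := by simp [jbr]

lemma jbr_add_le (a b : ℤ) : jbr (a + b) ≤ Real.sqrt 2 * jbr a * jbr b := by
  rw [jbr, jbr, jbr, ← Real.sqrt_mul (by norm_num), ← Real.sqrt_mul (by positivity)]
  apply Real.sqrt_le_sqrt
  push_cast
  nlinarith [sq_nonneg ((a:ℝ) - b), sq_nonneg ((a:ℝ) * b)]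

lemma abs_phiSym_le (k : ℤ) : ‖phiSym k‖ ≤ 1 / jbr k := by
  have h1 : (0:ℝ) < 1 + (k:ℝ)^2 := by positivity
  have h2 : ‖phiSym k‖ = |(k:ℝ)| / (1 + (k:ℝ)^2) := by
    rw [phiSym, norm_div, norm_mul]
    have : (1 + (k:ℂ)^2) = (((1 + (k:ℝ)^2 : ℝ)) : ℂ) := by push_cast; ring
    rw [this, Complex.norm_real, Real.norm_eq_abs, abs_of_pos h1]
    have : ((k:ℂ)) = (((k:ℝ)):ℂ) := by push_cast; ring
    rw [this, Complex.norm_real, Real.norm_eq_abs]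
    simp
  rw [h2, div_le_div_iff₀ h1 (jbr_pos k)]
  nlinarith [abs_le_jbr k, sq_jbr k, jbr_pos k, abs_nonneg ((k:ℝ))]

lemma card_lower (N : ℕ) : ((N:ℝ) + 1) ≤ (Finset.Icc (-(N:ℤ)) (N:ℤ)).card := by
  rw [Int.card_Icc]
  have : ((N:ℤ) + 1 - -(N:ℤ)) = 2*N + 1 := by ring
  rw [this]
  have : ((2*(N:ℤ)+1).toNat : ℤ) = 2*N+1 := Int.toNat_of_nonneg (by positivity)
  have h2 : ((2*(N:ℤ)+1).toNat : ℝ) = 2*(N:ℝ)+1 := by exact_mod_cast this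
  rw [h2]; linarith

lemma aux_tendsto (a : ℤ → ℝ) (ha : ∀ k, 1 ≤ a k) :
    Tendsto (fun N : ℕ =>
        (∑ k ∈ Finset.Icc (-(N:ℤ)) (N:ℤ), a k / jbr k) /
          ∑ k ∈ Finset.Icc (-(N:ℤ)) (N:ℤ), a k) atTop (nhds 0) := by
  have ha0 : ∀ k, 0 ≤ a k := fun k => le_trans zero_le_one (ha k)
  have hU : ∀ N : ℕ, ((N:ℝ) + 1) ≤ ∑ k ∈ Finset.Icc (-(N:ℤ)) (N:ℤ), a k := by
    intro N
    calc ((N:ℝ)+1) ≤ (Finset.Icc (-(N:ℤ)) (N:ℤ)).card := card_lower N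
    _ = ∑ k ∈ Finset.Icc (-(N:ℤ)) (N:ℤ), (1:ℝ) := by simp
    _ ≤ _ := Finset.sum_le_sum (fun k _ => ha k)
  have hUpos : ∀ N : ℕ, (0:ℝ) < ∑ k ∈ Finset.Icc (-(N:ℤ)) (N:ℤ), a k := by
    intro N
    have := hU N
    have h0 : (0:ℝ) < (N:ℝ)+1 := by positivity
    linarith
  rw [Metric.tendsto_atTop]
  intro ε hε
  obtain ⟨M, hM⟩ := exists_nat_gt ((2:ℝ)/ε)
  have hMpos : (0:ℝ) < M := lt_trans (by positivity) hM
  set A : ℝ := ∑ k ∈ Finset.Icc (-(M:ℤ)) (M:ℤ), a k with hA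
  obtain ⟨N₀, hN₀⟩ := exists_nat_gt (2*A/ε)
  refine ⟨N₀, fun N hN => ?_⟩
  set U : ℝ := ∑ k ∈ Finset.Icc (-(N:ℤ)) (N:ℤ), a k with hUdef
  set T : ℝ := ∑ k ∈ Finset.Icc (-(N:ℤ)) (N:ℤ), a k / jbr k with hT
  have hUp : (0:ℝ) < U := hUpos N
  have hTnn : 0 ≤ T := Finset.sum_nonneg (fun k _ => div_nonneg (ha0 k) (jbr_pos k).le)
  rw [Real.dist_eq, sub_zero, abs_of_nonneg (div_nonneg hTnn hUp.le), div_lt_iff₀ hUp]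
  -- split T
  have hsplit : T = (∑ k ∈ (Finset.Icc (-(N:ℤ)) (N:ℤ)).filter (fun k => |k| ≤ (M:ℤ)), a k / jbr k)
      + ∑ k ∈ (Finset.Icc (-(N:ℤ)) (N:ℤ)).filter (fun k => ¬ |k| ≤ (M:ℤ)), a k / jbr k :=
    (Finset.sum_filter_add_sum_filter_not _ _ _).symm
  have hb1 : (∑ k ∈ (Finset.Icc (-(N:ℤ)) (N:ℤ)).filter (fun k => |k| ≤ (M:ℤ)), a k / jbr k) ≤ A := by
    calc _ ≤ ∑ k ∈ (Finset.Icc (-(N:ℤ)) (N:ℤ)).filter (fun k => |k| ≤ (M:ℤ)), a k :=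
          Finset.sum_le_sum (fun k _ => div_le_self (ha0 k) (one_le_jbr k))
    _ ≤ A := by
        apply Finset.sum_le_sum_of_subset_of_nonneg
        · intro k hk
          simp only [Finset.mem_filter] at hk
          exact Finset.mem_Icc.2 (abs_le.1 hk.2)
        · intro k _ _; exact ha0 k
  have hb2 : (∑ k ∈ (Finset.Icc (-(N:ℤ)) (N:ℤ)).filter (fun k => ¬ |k| ≤ (M:ℤ)), a k / jbr k)
      ≤ (ε/2) * U := by
    calc _ ≤ ∑ k ∈ (Finset.Icc (-(N:ℤ)) (N:ℤ)).filter (fun k => ¬ |k| ≤ (M:ℤ)), (ε/2) * a k := by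
          apply Finset.sum_le_sum
          intro k hk
          simp only [Finset.mem_filter, not_le] at hk
          have hjk : (2:ℝ)/ε ≤ jbr k := by
            have h1 : ((M:ℝ)) < |(k:ℝ)| := by exact_mod_cast (by exact_mod_cast hk.2 : ((M:ℤ):ℝ) < |(k:ℤ)|)
            calc (2:ℝ)/ε ≤ (M:ℝ) := hM.le
            _ ≤ |(k:ℝ)| := h1.le
            _ ≤ jbr k := abs_le_jbr k
          have h2e : (0:ℝ) < 2/ε := by positivity
          calc a k / jbr k ≤ a k / (2/ε) := by
                apply div_le_div_of_nonneg_left (ha0 k) h2e hjk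
          _ = (ε/2) * a k := by field_simp
    _ = (ε/2) * ∑ k ∈ (Finset.Icc (-(N:ℤ)) (N:ℤ)).filter (fun k => ¬ |k| ≤ (M:ℤ)), a k := by
          rw [Finset.mul_sum]
    _ ≤ (ε/2) * U := by
          apply mul_le_mul_of_nonneg_left _ (by positivity)
          apply Finset.sum_le_sum_of_subset_of_nonneg (Finset.filter_subset _ _)
          intro k _ _; exact ha0 k
  have hAU : A < (ε/2) * U := by
    have h1 : (N₀:ℝ) ≤ U := by
      calc (N₀:ℝ) ≤ (N:ℝ) := by exact_mod_cast hN
      _ ≤ (N:ℝ) + 1 := by linarith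
      _ ≤ U := hU N
    have h2 : 2*A/ε < U := lt_of_lt_of_le hN₀ h1
    rw [div_lt_iff₀ hε] at h2
    linarith
  linarith [hsplit, hb1, hb2, hAU]

/-- For `α ≤ 0` and fixed `n ∈ ℤ`,
`C_{α,N}⁴ ∑_{n₁+n₂=n, |n₁|,|n₂|≤N} |φ(n₁)+φ(n₂)| ⟨n₁⟩^{-2α}⟨n₂⟩^{-2α} → 0`
as `N → ∞`. -/
theorem renC_phi_sum_tendsto_zero (α : ℝ) (hα : α ≤ 0) (n : ℤ) :
    Tendsto (fun N : ℕ =>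
      renC α N ^ 4 *
        ∑ p ∈ pairSet N n,
          ‖phiSym p.1 + phiSym p.2‖
            * jbr p.1 ^ (-(2 * α)) * jbr p.2 ^ (-(2 * α)))
      atTop (nhds 0) := by
  set β : ℝ := -(2 * α) with hβdef
  have hβ : 0 ≤ β := by simp [hβdef]; linarith
  set a : ℤ → ℝ := fun k => jbr k ^ β * jbr k ^ β with hadef
  have hrpow1 : ∀ k : ℤ, 1 ≤ jbr k ^ β := by
    intro k
    calc (1:ℝ) = 1 ^ β := (Real.one_rpow β).symm
    _ ≤ jbr k ^ β := Real.rpow_le_rpow zero_le_one (one_le_jbr k) hβ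
  have ha1 : ∀ k, 1 ≤ a k := fun k =>
    one_le_mul_of_one_le_of_one_le (hrpow1 k) (hrpow1 k)
  have ha0 : ∀ k, 0 ≤ a k := fun k => le_trans zero_le_one (ha1 k)
  set U : ℕ → ℝ := fun N => ∑ k ∈ Finset.Icc (-(N:ℤ)) (N:ℤ), a k with hUdef
  set T : ℕ → ℝ := fun N => ∑ k ∈ Finset.Icc (-(N:ℤ)) (N:ℤ), a k / jbr k with hTdef
  have hUpos : ∀ N, 0 < U N := by
    intro N
    apply Finset.sum_pos (fun k _ => lt_of_lt_of_le one_pos (ha1 k))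
    exact ⟨0, by simp⟩
  -- renC ^ 4 = (2 * U N)⁻¹
  have hrenC4 : ∀ N, renC α N ^ 4 = (2 * U N)⁻¹ := by
    intro N
    have hsum : (∑ k ∈ Finset.Icc (-(N : ℤ)) (N : ℤ), 2 / jbr k ^ (4 * α)) = 2 * U N := by
      rw [hUdef, Finset.mul_sum]
      apply Finset.sum_congr rfl
      intro k _
      rw [div_eq_mul_inv, ← Real.rpow_neg (jbr_pos k).le]
      congr 1
      rw [hadef]
      dsimp only
      rw [← Real.rpow_add (jbr_pos k)]
      congr 1
      rw [hβdef]; ring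
    have h2U : (0:ℝ) < 2 * U N := by have := hUpos N; linarith
    rw [renC, hsum, ← Real.rpow_natCast ((2 * U N) ^ (-(1/4:ℝ))) 4,
      ← Real.rpow_mul h2U.le]
    norm_num [Real.rpow_neg_one]
  -- constant
  set K : ℝ := (Real.sqrt 2 * jbr n) ^ β with hKdef
  have hbase : (0:ℝ) < Real.sqrt 2 * jbr n :=
    mul_pos (Real.sqrt_pos.2 (by norm_num)) (jbr_pos n)
  have hKpos : 0 < K := Real.rpow_pos_of_pos hbase β
  -- pointwise bound on pairs
  have hpair : ∀ N, ∀ p ∈ pairSet N n,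
      ‖phiSym p.1 + phiSym p.2‖ * jbr p.1 ^ β * jbr p.2 ^ β
        ≤ K * (a p.1 / jbr p.1 + a p.2 / jbr p.2) := by
    intro N p hp
    have hpn : p.1 + p.2 = n := by
      simp only [pairSet, Finset.mem_filter] at hp; exact hp.2
    have h21 : jbr p.2 ≤ Real.sqrt 2 * jbr n * jbr p.1 := by
      have : p.2 = n + -p.1 := by omega
      rw [this]
      calc jbr (n + -p.1) ≤ Real.sqrt 2 * jbr n * jbr (-p.1) := jbr_add_le n (-p.1)
      _ = Real.sqrt 2 * jbr n * jbr p.1 := by rw [jbr_neg]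
    have h12 : jbr p.1 ≤ Real.sqrt 2 * jbr n * jbr p.2 := by
      have : p.1 = n + -p.2 := by omega
      rw [this]
      calc jbr (n + -p.2) ≤ Real.sqrt 2 * jbr n * jbr (-p.2) := jbr_add_le n (-p.2)
      _ = Real.sqrt 2 * jbr n * jbr p.2 := by rw [jbr_neg]
    have hr21 : jbr p.2 ^ β ≤ K * jbr p.1 ^ β := by
      calc jbr p.2 ^ β ≤ (Real.sqrt 2 * jbr n * jbr p.1) ^ β :=
            Real.rpow_le_rpow (jbr_pos _).le h21 hβ
      _ = K * jbr p.1 ^ β := by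
            rw [hKdef, ← Real.mul_rpow hbase.le (jbr_pos p.1).le]
    have hr12 : jbr p.1 ^ β ≤ K * jbr p.2 ^ β := by
      calc jbr p.1 ^ β ≤ (Real.sqrt 2 * jbr n * jbr p.2) ^ β :=
            Real.rpow_le_rpow (jbr_pos _).le h12 hβ
      _ = K * jbr p.2 ^ β := by
            rw [hKdef, ← Real.mul_rpow hbase.le (jbr_pos p.2).le]
    have habs : ‖phiSym p.1 + phiSym p.2‖ ≤ 1 / jbr p.1 + 1 / jbr p.2 :=
      le_trans (norm_add_le _ _) (add_le_add (abs_phiSym_le p.1) (abs_phiSym_le p.2))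
    have hb1 : (0:ℝ) ≤ jbr p.1 ^ β := (Real.rpow_pos_of_pos (jbr_pos _) β).le
    have hb2 : (0:ℝ) ≤ jbr p.2 ^ β := (Real.rpow_pos_of_pos (jbr_pos _) β).le
    calc ‖phiSym p.1 + phiSym p.2‖ * jbr p.1 ^ β * jbr p.2 ^ β
        ≤ (1 / jbr p.1 + 1 / jbr p.2) * jbr p.1 ^ β * jbr p.2 ^ β := by
          apply mul_le_mul_of_nonneg_right (mul_le_mul_of_nonneg_right habs hb1) hb2
    _ = (1 / jbr p.1) * (jbr p.1 ^ β * jbr p.2 ^ β)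
        + (1 / jbr p.2) * (jbr p.1 ^ β * jbr p.2 ^ β) := by ring
    _ ≤ (1 / jbr p.1) * (jbr p.1 ^ β * (K * jbr p.1 ^ β))
        + (1 / jbr p.2) * ((K * jbr p.2 ^ β) * jbr p.2 ^ β) := by
          apply add_le_add
          · apply mul_le_mul_of_nonneg_left (mul_le_mul_of_nonneg_left hr21 hb1)
              (by have := jbr_pos p.1; positivity)
          · apply mul_le_mul_of_nonneg_left (mul_le_mul_of_nonneg_right hr12 hb2)
              (by have := jbr_pos p.2; positivity)
    _ = K * (a p.1 / jbr p.1 + a p.2 / jbr p.2) := by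
          rw [hadef]; dsimp only; field_simp
  -- sum over pairSet of f ∘ fst / snd  ≤ T N
  have hfst : ∀ N, (∑ p ∈ pairSet N n, a p.1 / jbr p.1) ≤ T N := by
    intro N
    have h1 : (∑ k ∈ (pairSet N n).image Prod.fst, a k / jbr k)
        = ∑ p ∈ pairSet N n, a p.1 / jbr p.1 := by
      apply Finset.sum_image
      intro p hp q hq hpq
      simp only [Finset.mem_coe, pairSet, Finset.mem_filter] at hp hq
      have : p.2 = q.2 := by omega
      exact Prod.ext hpq this
    rw [hTdef, ← h1]
    apply Finset.sum_le_sum_of_subset_of_nonneg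
    · intro k hk
      simp only [Finset.mem_image, pairSet, Finset.mem_filter, Finset.mem_product] at hk
      obtain ⟨p, ⟨⟨h1, _⟩, _⟩, rfl⟩ := hk
      exact h1
    · intro k _ _; exact div_nonneg (ha0 k) (jbr_pos k).le
  have hsnd : ∀ N, (∑ p ∈ pairSet N n, a p.2 / jbr p.2) ≤ T N := by
    intro N
    have h1 : (∑ k ∈ (pairSet N n).image Prod.snd, a k / jbr k)
        = ∑ p ∈ pairSet N n, a p.2 / jbr p.2 := by
      apply Finset.sum_image
      intro p hp q hq hpq
      simp only [Finset.mem_coe, pairSet, Finset.mem_filter] at hp hq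
      have : p.1 = q.1 := by omega
      exact Prod.ext this hpq
    rw [hTdef, ← h1]
    apply Finset.sum_le_sum_of_subset_of_nonneg
    · intro k hk
      simp only [Finset.mem_image, pairSet, Finset.mem_filter, Finset.mem_product] at hk
      obtain ⟨p, ⟨⟨_, h2⟩, _⟩, rfl⟩ := hk
      exact h2
    · intro k _ _; exact div_nonneg (ha0 k) (jbr_pos k).le
  have hTnn : ∀ N, 0 ≤ T N :=
    fun N => Finset.sum_nonneg (fun k _ => div_nonneg (ha0 k) (jbr_pos k).le)
  -- squeeze
  apply squeeze_zero (g := fun N => K * (T N / U N))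
  · intro N
    have h0 : 0 ≤ renC α N :=
      Real.rpow_nonneg (Finset.sum_nonneg (fun k _ => by
        have := jbr_pos k; positivity)) _
    have h1 : 0 ≤ ∑ p ∈ pairSet N n,
        ‖phiSym p.1 + phiSym p.2‖ * jbr p.1 ^ β * jbr p.2 ^ β :=
      Finset.sum_nonneg (fun p _ => by
        have h1 := jbr_pos p.1; have h2 := jbr_pos p.2; positivity)
    exact mul_nonneg (pow_nonneg h0 4) h1
  · intro N
    have hS : (∑ p ∈ pairSet N n,
        ‖phiSym p.1 + phiSym p.2‖ * jbr p.1 ^ (-(2*α)) * jbr p.2 ^ (-(2*α)))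
        ≤ K * (2 * T N) := by
      calc _ ≤ ∑ p ∈ pairSet N n, K * (a p.1 / jbr p.1 + a p.2 / jbr p.2) :=
            Finset.sum_le_sum (hpair N)
      _ = K * ((∑ p ∈ pairSet N n, a p.1 / jbr p.1) + ∑ p ∈ pairSet N n, a p.2 / jbr p.2) := by
            rw [← Finset.mul_sum, Finset.sum_add_distrib]
      _ ≤ K * (2 * T N) := by
            apply mul_le_mul_of_nonneg_left _ hKpos.le
            have := hfst N; have := hsnd N; linarith
    rw [hrenC4 N]
    calc (2 * U N)⁻¹ * (∑ p ∈ pairSet N n,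
        ‖phiSym p.1 + phiSym p.2‖ * jbr p.1 ^ (-(2*α)) * jbr p.2 ^ (-(2*α)))
        ≤ (2 * U N)⁻¹ * (K * (2 * T N)) := by
          apply mul_le_mul_of_nonneg_left hS
          have := hUpos N; positivity
    _ = K * (T N / U N) := by
          have := (hUpos N).ne'
          field_simp
  · have := (aux_tendsto a ha1).const_mul K
    simpa using this
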